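/- Let X : [0,∞) → ℝ² be continuous, twice continuously differentiable on (0,∞), with X(0) = X₀ and Ẋ(t) → 0 as t → 0⁺, satisfying Ẍ(t) + (3/t)·Ẋ(t) + ∇f_{ε,a}(X(t)) = 0 for all t > 0, and let J(t) = det(X(t), Ẋ(t)). Then for all t > 0, t³·J(t) = ε·∫₀^t s³·X₂(s)·(X₁(s) − a)₊ ds. -/

import Mathlib

/-- `F(0) = 0`, `F(r) = ∫₀^r du/(−log u)` for `0 < r ≤ e⁻²`,
`F(r) = F(e⁻²) + (1/2)(r − e⁻²)` for `r ≥ e⁻²`. -/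
noncomputable def F (r : ℝ) : ℝ :=
  if r ≤ Real.exp (-2) then ∫ u in (0:ℝ)..r, 1 / (-Real.log u)
  else (∫ u in (0:ℝ)..Real.exp (-2), 1 / (-Real.log u)) + (1/2) * (r - Real.exp (-2))

noncomputable def phi (r : ℝ) : ℝ := if r ≤ Real.exp (-2) then 1 / (-Real.log r) else 1/2

lemma g_contAt {u : ℝ} (h0 : 0 < u) (h1 : u < 1) :
    ContinuousAt (fun u : ℝ => 1 / (-Real.log u)) u := by
  have hlog : Real.log u < 0 := Real.log_neg h0 h1
  exact (continuousAt_const.div ((Real.continuousAt_log h0.ne').neg) (by linarith))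

lemma g_intble {r : ℝ} (hr : 0 ≤ r) (h1 : r < 1) :
    IntervalIntegrable (fun u : ℝ => 1 / (-Real.log u)) MeasureTheory.volume 0 r := by
  apply ContinuousOn.intervalIntegrable
  rw [Set.uIcc_of_le hr]
  intro u hu
  rcases eq_or_lt_of_le hu.1 with h | h
  · subst h
    have htend : Filter.Tendsto (fun u : ℝ => 1 / (-Real.log u)) (nhdsWithin 0 (Set.Ioi 0))
        (nhds (1 / (-Real.log 0))) := by
      rw [Real.log_zero]
      simpa [one_div, Pi.inv_def, Function.comp_def] using
        ((Filter.tendsto_neg_atBot_atTop.comp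
          Real.tendsto_log_nhdsGT_zero)).inv_tendsto_atTop
    exact (ContinuousWithinAt.insert htend).mono
      (fun y hy => Set.mem_insert_iff.mpr (hy.1.eq_or_lt.imp Eq.symm id))
  · exact (g_contAt h (lt_of_le_of_lt hu.2 h1)).continuousWithinAt

lemma F_hasDerivAt {r : ℝ} (hr : 0 < r) : HasDerivAt F (phi r) r := by
  have hc0 : (0:ℝ) < Real.exp (-2 : ℝ) := Real.exp_pos _
  have hc1 : Real.exp (-2 : ℝ) < 1 := Real.exp_lt_one_iff.mpr (by norm_num)
  have hlogc : Real.log (Real.exp (-2 : ℝ)) = -2 := Real.log_exp _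
  have hI : ∀ b : ℝ, 0 < b → b < 1 →
      HasDerivAt (fun u : ℝ => ∫ x in (0:ℝ)..u, 1 / (-Real.log x)) (1 / (-Real.log b)) b := by
    intro b hb0 hb1
    exact intervalIntegral.integral_hasDerivAt_right (g_intble hb0.le hb1)
      (measurable_const.div Real.measurable_log.neg).aestronglyMeasurable.stronglyMeasurableAtFilter
      (g_contAt hb0 hb1)
  rcases lt_trichotomy r (Real.exp (-2:ℝ)) with h | h | h
  · rw [show phi r = 1 / (-Real.log r) from if_pos h.le]
    apply (hI r hr (h.trans hc1)).congr_of_eventuallyEq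
    filter_upwards [Iio_mem_nhds h] with y hy
    simp only [F, if_pos (le_of_lt (Set.mem_Iio.mp hy))]
  · rw [show phi r = 1/2 by rw [phi, if_pos h.le, h, hlogc]; norm_num]
    rw [h]
    have hleft : HasDerivWithinAt F (1/2) (Set.Iic (Real.exp (-2:ℝ))) (Real.exp (-2:ℝ)) := by
      have h2 := (hI _ hc0 hc1).hasDerivWithinAt (s := Set.Iic (Real.exp (-2:ℝ)))
      rw [hlogc, show (1:ℝ) / -(-2:ℝ) = 1/2 by norm_num] at h2
      apply h2.congr
      · intro y hy; simp only [F, if_pos (Set.mem_Iic.mp hy)]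
      · simp [F]
    have hright : HasDerivWithinAt F (1/2) (Set.Ici (Real.exp (-2:ℝ))) (Real.exp (-2:ℝ)) := by
      have hA : HasDerivAt (fun y : ℝ =>
          (∫ u in (0:ℝ)..Real.exp (-2:ℝ), 1 / (-Real.log u)) + (1/2) * (y - Real.exp (-2:ℝ)))
          (1/2) (Real.exp (-2:ℝ)) := by
        simpa using (((hasDerivAt_id (Real.exp (-2:ℝ))).sub_const (Real.exp (-2:ℝ))).const_mul
          (1/2 : ℝ)).const_add (∫ u in (0:ℝ)..Real.exp (-2:ℝ), 1 / (-Real.log u))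
      apply (hA.hasDerivWithinAt (s := Set.Ici (Real.exp (-2:ℝ)))).congr
      · intro y hy
        rcases eq_or_lt_of_le (Set.mem_Ici.mp hy) with h' | h'
        · rw [← h']; simp [F]
        · simp only [F, if_neg (not_le.mpr h')]
      · simp [F]
    have := hleft.union hright
    rwa [Set.Iic_union_Ici, hasDerivWithinAt_univ] at this
  · rw [show phi r = 1/2 from if_neg (not_le.mpr h)]
    have hA : HasDerivAt (fun y : ℝ =>
        (∫ u in (0:ℝ)..Real.exp (-2:ℝ), 1 / (-Real.log u)) + (1/2) * (y - Real.exp (-2:ℝ)))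
        (1/2) r := by
      simpa using (((hasDerivAt_id r).sub_const (Real.exp (-2:ℝ))).const_mul
        (1/2 : ℝ)).const_add (∫ u in (0:ℝ)..Real.exp (-2:ℝ), 1 / (-Real.log u))
    apply hA.congr_of_eventuallyEq
    filter_upwards [Ioi_mem_nhds h] with y hy
    simp only [F, if_neg (not_le.mpr (Set.mem_Ioi.mp hy))]

lemma maxsq_hasDerivAt (b u : ℝ) :
    HasDerivAt (fun u : ℝ => (max (u - b) 0)^2) (2 * max (u - b) 0) u := by
  rcases lt_trichotomy u b with h | h | h
  · have he : (fun u : ℝ => (max (u - b) 0)^2) =ᶠ[nhds u] fun _ => 0 := by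
      filter_upwards [Iio_mem_nhds h] with y hy
      rw [max_eq_right (by simp only [Set.mem_Iio] at hy; linarith : y - b ≤ 0)]
      norm_num
    rw [show 2 * max (u - b) 0 = 0 by rw [max_eq_right (by linarith : u - b ≤ 0)]; ring]
    exact (hasDerivAt_const u 0).congr_of_eventuallyEq he
  · subst h
    rw [hasDerivAt_iff_isLittleO]
    simp only [sub_self, max_self, max_eq_right le_rfl, mul_zero, smul_zero, sub_zero]
    rw [Asymptotics.isLittleO_iff]
    intro c hc
    filter_upwards [Metric.ball_mem_nhds u hc] with y hy
    rw [Metric.mem_ball, Real.dist_eq] at hy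
    have h1 : max (y - u) 0 ≤ |y - u| := max_le (le_abs_self _) (abs_nonneg _)
    have h2 : (0:ℝ) ≤ max (y - u) 0 := le_max_right _ _
    have : (max (y - u) 0)^2 ≤ c * |y - u| := by nlinarith [abs_nonneg (y - u)]
    simpa [Real.norm_eq_abs, abs_of_nonneg (sq_nonneg (max (y - u) 0))] using this
  · have he : (fun u : ℝ => (max (u - b) 0)^2) =ᶠ[nhds u] fun y => (y - b)^2 := by
      filter_upwards [Ioi_mem_nhds h] with y hy
      rw [max_eq_left (by simp only [Set.mem_Ioi] at hy; linarith : 0 ≤ y - b)]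
    rw [show 2 * max (u - b) 0 = 2 * (u - b) by rw [max_eq_left (by linarith : 0 ≤ u - b)]]
    refine HasDerivAt.congr_of_eventuallyEq ?_ he
    simpa using ((hasDerivAt_id u).sub_const b).fun_pow 2

/-- `f_{ε,a}(x₁,x₂) = F(√(x₁²+x₂²)) + (ε/2)·((x₁ − a)₊)²`. -/
noncomputable def feps (ε a : ℝ) (x : EuclideanSpace ℝ (Fin 2)) : ℝ :=
  F (Real.sqrt ((x 0)^2 + (x 1)^2)) + (ε/2) * (max (x 0 - a) 0)^2

lemma det_grad (ε a : ℝ) (x : EuclideanSpace ℝ (Fin 2)) :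
    x 0 * gradient (feps ε a) x 1 - x 1 * gradient (feps ε a) x 0
      = -(ε * x 1 * max (x 0 - a) 0) := by
  by_cases hx : x = 0
  · subst hx
    simp
  · -- positivity of the squared norm
    have hn : 0 < (x 0)^2 + (x 1)^2 := by
      rcases (add_nonneg (sq_nonneg (x 0)) (sq_nonneg (x 1))).lt_or_eq with h | h
      · exact h
      · exfalso
        apply hx
        have h0 : (x 0)^2 = 0 ∧ (x 1)^2 = 0 := by
          constructor <;> nlinarith [sq_nonneg (x 0), sq_nonneg (x 1)]
        ext i
        fin_cases i
        · simpa using pow_eq_zero_iff (n := 2) (by norm_num) |>.mp h0.1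
        · simpa using pow_eq_zero_iff (n := 2) (by norm_num) |>.mp h0.2
    set r := Real.sqrt ((x 0)^2 + (x 1)^2) with hrdef
    have hr : 0 < r := Real.sqrt_pos.mpr hn
    have hr2 : r ^ 2 = (x 0)^2 + (x 1)^2 := Real.sq_sqrt hn.le
    set m := max (x 0 - a) 0 with hm
    -- fderiv pieces
    have hp0 : HasFDerivAt (fun y : EuclideanSpace ℝ (Fin 2) => y 0)
        (EuclideanSpace.proj (0 : Fin 2) : EuclideanSpace ℝ (Fin 2) →L[ℝ] ℝ) x := by
      have h := (EuclideanSpace.proj (0 : Fin 2) :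
          EuclideanSpace ℝ (Fin 2) →L[ℝ] ℝ).hasFDerivAt (x := x)
      exact h.congr_of_eventuallyEq (Filter.Eventually.of_forall fun y => rfl)
    have hp1 : HasFDerivAt (fun y : EuclideanSpace ℝ (Fin 2) => y 1)
        (EuclideanSpace.proj (1 : Fin 2) : EuclideanSpace ℝ (Fin 2) →L[ℝ] ℝ) x := by
      have h := (EuclideanSpace.proj (1 : Fin 2) :
          EuclideanSpace ℝ (Fin 2) →L[ℝ] ℝ).hasFDerivAt (x := x)
      exact h.congr_of_eventuallyEq (Filter.Eventually.of_forall fun y => rfl)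
    have hN : HasFDerivAt (fun y : EuclideanSpace ℝ (Fin 2) => (y 0)^2 + (y 1)^2) _ x :=
      ((hp0.mul hp0).add (hp1.mul hp1)).congr_of_eventuallyEq
        (Filter.Eventually.of_forall fun y => by simp only [Pi.add_apply, Pi.mul_apply]; ring)
    have hs := (Real.hasDerivAt_sqrt hn.ne').comp_hasFDerivAt x hN
    have hFc := (F_hasDerivAt hr).comp_hasFDerivAt x hs
    have hq := ((maxsq_hasDerivAt a (x 0)).const_mul (ε/2)).comp_hasFDerivAt x hp0
    have htot := hFc.add hq
    have hfeps : HasFDerivAt (feps ε a) _ x := htot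
    set w : EuclideanSpace ℝ (Fin 2) :=
      (phi r / r) • x + (ε * m) • EuclideanSpace.single (0 : Fin 2) (1:ℝ) with hw
    have hgrad : HasGradientAt (feps ε a) w x := by
      rw [hasGradientAt_iff_hasFDerivAt]
      refine hfeps.congr_fderiv (ContinuousLinearMap.ext fun v => ?_).symm
      simp [InnerProductSpace.toDual_apply_apply, PiLp.inner_apply, RCLike.inner_apply,
        Fin.sum_univ_two, hw, EuclideanSpace.single_apply, smul_eq_mul,
        ContinuousLinearMap.add_apply, ContinuousLinearMap.smul_apply]
      rw [← hrdef, ← hm]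
      field_simp
      ring
    have hg := hgrad.gradient
    rw [hg, hw]
    simp [EuclideanSpace.single_apply, smul_eq_mul]
    ring

/-- along a solution `X` of the Nesterov flow for `f_{ε,a}`, with
`J(t) = det(X(t), Ẋ(t))`, one has `t³·J(t) = ε·∫₀^t s³·X₂(s)·(X₁(s) − a)₊ ds`
for all `t > 0`. -/
theorem angular_momentum_integral_identity (a ε : ℝ) (ha : 0 < a) (hε : 0 < ε)
    (X₀ : EuclideanSpace ℝ (Fin 2)) (X X' X'' : ℝ → EuclideanSpace ℝ (Fin 2))
    (hXcont : ContinuousOn X (Set.Ici 0))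
    (hX' : ∀ t > (0:ℝ), HasDerivAt X (X' t) t)
    (hX'' : ∀ t > (0:ℝ), HasDerivAt X' (X'' t) t)
    (hX''cont : ContinuousOn X'' (Set.Ioi 0))
    (hX0 : X 0 = X₀)
    (hX'0 : Filter.Tendsto X' (nhdsWithin 0 (Set.Ioi 0)) (nhds 0))
    (hODE : ∀ t > (0:ℝ), X'' t + (3 / t) • X' t + gradient (feps ε a) (X t) = 0)
    (J : ℝ → ℝ) (hJ : ∀ t, J t = X t 0 * X' t 1 - X t 1 * X' t 0) :
    ∀ t > (0:ℝ),
      t ^ 3 * J t = ε * ∫ s in (0:ℝ)..t, s ^ 3 * X s 1 * max (X s 0 - a) 0 := by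
  -- component-wise derivatives
  have hcomp : ∀ (Y Y' : ℝ → EuclideanSpace ℝ (Fin 2)) (s : ℝ) (i : Fin 2),
      HasDerivAt Y (Y' s) s → HasDerivAt (fun u => Y u i) (Y' s i) s := by
    intro Y Y' s i hY
    have h := (EuclideanSpace.proj i :
      EuclideanSpace ℝ (Fin 2) →L[ℝ] ℝ).hasFDerivAt.comp_hasDerivAt s hY
    exact h.congr_of_eventuallyEq (Filter.Eventually.of_forall fun y => rfl)
  -- derivative of J
  have hJd : ∀ s > (0:ℝ), HasDerivAt J (X s 0 * X'' s 1 - X s 1 * X'' s 0) s := by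
    intro s hs
    have hx0 := hcomp X X' s 0 (hX' s hs)
    have hx1 := hcomp X X' s 1 (hX' s hs)
    have hx'0 := hcomp X' X'' s 0 (hX'' s hs)
    have hx'1 := hcomp X' X'' s 1 (hX'' s hs)
    have h := (hx0.fun_mul hx'1).fun_sub (hx1.fun_mul hx'0)
    have h2 := h.congr_of_eventuallyEq (Filter.Eventually.of_forall fun y => hJ y)
    -- fix up derivative value
    refine h2.congr_deriv (Eq.symm ?_)
    ring
  -- key derivative computation
  have key : ∀ s > (0:ℝ), HasDerivAt (fun u => u ^ 3 * J u)
      (ε * (s ^ 3 * X s 1 * max (X s 0 - a) 0)) s := by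
    intro s hs
    have hG := (hasDerivAt_pow 3 s).fun_mul (hJd s hs)
    refine hG.congr_deriv (Eq.symm ?_)
    have hODEs := hODE s hs
    have h0 := congrArg (fun v => v 0) hODEs
    have h1 := congrArg (fun v => v 1) hODEs
    simp only [PiLp.add_apply, PiLp.smul_apply, PiLp.zero_apply, smul_eq_mul] at h0 h1
    have hdet := det_grad ε a (X s)
    have hs0 : s ≠ 0 := ne_of_gt hs
    rw [hJ s]
    field_simp at h0 h1 ⊢
    linear_combination (-(s^2 * X s 0)) * h1 + s^2 * X s 1 * h0 + s^3 * hdet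
  -- continuity of components
  have hXicont : ∀ i : Fin 2, ContinuousOn (fun s => X s i) (Set.Ici 0) := fun i =>
    (EuclideanSpace.proj i : EuclideanSpace ℝ (Fin 2) →L[ℝ] ℝ).continuous.comp_continuousOn
      hXcont
  intro t ht
  -- the integrand is continuous on [0, t]
  have hfcont : ContinuousOn (fun s : ℝ => ε * (s ^ 3 * X s 1 * max (X s 0 - a) 0))
      (Set.Icc 0 t) := by
    have hsub : Set.Icc (0:ℝ) t ⊆ Set.Ici 0 := fun y hy => hy.1
    exact continuousOn_const.mul
      (((continuous_pow 3).continuousOn.mul ((hXicont 1).mono hsub)).mul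
        (((hXicont 0).mono hsub).sub continuousOn_const |>.sup continuousOn_const))
  -- continuity of G on [0, t]
  have hGcont : ContinuousOn (fun u : ℝ => u ^ 3 * J u) (Set.Icc 0 t) := by
    intro y hy
    rcases hy.1.eq_or_lt with h | h
    · -- continuity at 0 from the right
      subst h
      have hXlim : ∀ i : Fin 2, Filter.Tendsto (fun s => X s i)
          (nhdsWithin 0 (Set.Ioi 0)) (nhds (X 0 i)) := by
        intro i
        exact ((hXicont i) 0 Set.self_mem_Ici).tendsto.mono_left
          (nhdsWithin_mono _ (fun y hy => Set.mem_Ici.mpr (le_of_lt hy)))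
      have hX'lim : ∀ i : Fin 2, Filter.Tendsto (fun s => X' s i)
          (nhdsWithin 0 (Set.Ioi 0)) (nhds 0) := by
        intro i
        have := ((EuclideanSpace.proj i : EuclideanSpace ℝ (Fin 2) →L[ℝ] ℝ).continuous.tendsto
          (0 : EuclideanSpace ℝ (Fin 2))).comp hX'0
        simpa [Function.comp_def] using this
      have hJlim : Filter.Tendsto J (nhdsWithin 0 (Set.Ioi 0)) (nhds 0) := by
        have h := ((hXlim 0).mul (hX'lim 1)).sub ((hXlim 1).mul (hX'lim 0))
        rw [show X 0 0 * 0 - X 0 1 * 0 = 0 by ring] at h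
        apply h.congr
        intro y; rw [hJ y]
      have hGlim : Filter.Tendsto (fun u : ℝ => u ^ 3 * J u)
          (nhdsWithin 0 (Set.Ioi 0)) (nhds ((0:ℝ) ^ 3 * J 0)) := by
        rw [show (0:ℝ) ^ 3 * J 0 = 0 ^ 3 * 0 by ring]
        exact ((continuous_pow 3).tendsto 0).mono_left nhdsWithin_le_nhds |>.mul hJlim
      exact (ContinuousWithinAt.insert hGlim).mono
        (fun y hy => Set.mem_insert_iff.mpr (hy.1.eq_or_lt.imp Eq.symm id))
    · exact (((hasDerivAt_pow 3 y).mul (hJd y h)).continuousAt).continuousWithinAt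
  -- FTC
  have hint : IntervalIntegrable (fun s : ℝ => ε * (s ^ 3 * X s 1 * max (X s 0 - a) 0))
      MeasureTheory.volume 0 t := by
    apply ContinuousOn.intervalIntegrable
    rwa [Set.uIcc_of_le ht.le]
  have hFTC := intervalIntegral.integral_eq_sub_of_hasDeriv_right
    (f := fun u : ℝ => u ^ 3 * J u)
    (f' := fun s : ℝ => ε * (s ^ 3 * X s 1 * max (X s 0 - a) 0))
    (by rwa [Set.uIcc_of_le ht.le]) ?_ hint
  · rw [intervalIntegral.integral_const_mul] at hFTC
    simp only at hFTC
    rw [hFTC]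
    ring
  · intro y hy
    rw [min_def, max_def] at hy
    simp only [if_pos ht.le] at hy
    exact ((key y hy.1).hasDerivWithinAt)
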